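/- Let L be the smallest constant such that for all j, ‖∇_j V(x_j, x_{-j}) - ∇_j V(x_j, x'_{-j})‖ ≤ L‖x_{-j} - x'_{-j}‖, and let L_c be the smallest constant such that ‖∇_j V(y_j, x_{-j}) - ∇_j V(z_j, x_{-j})‖ ≤ L_c‖y_j - z_j‖ for all j. Then for a twice continuously differentiable convex function V: ℝ^m → ℝ (with m blocks each of dimension 1), we have L ≤ √(m-1) · L_c. -/

import Mathlib

open Filter Topology Finset

/-- The `j`-th partial derivative (partial gradient for 1-dimensional blocks) of `V`. -/
noncomputable def pgrad {m : ℕ} (V : EuclideanSpace ℝ (Fin m) → ℝ)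
    (j : Fin m) (x : EuclideanSpace ℝ (Fin m)) : ℝ :=
  fderiv ℝ V x (EuclideanSpace.single j 1)

/-- `L` is a cross-block Lipschitz constant: changing only the off-`j` coordinates
changes `∂_j V` by at most `L` times the Euclidean distance. -/
def CrossLip {m : ℕ} (V : EuclideanSpace ℝ (Fin m) → ℝ) (L : ℝ) : Prop :=
  ∀ j : Fin m, ∀ x x' : EuclideanSpace ℝ (Fin m), x j = x' j →
    |pgrad V j x - pgrad V j x'| ≤ L * ‖x - x'‖

/-- `Lc` is a coordinate-wise Lipschitz constant: changing only the `j`-th coordinate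
changes `∂_j V` by at most `Lc` times the distance. -/
def CoordLip {m : ℕ} (V : EuclideanSpace ℝ (Fin m) → ℝ) (Lc : ℝ) : Prop :=
  ∀ j : Fin m, ∀ x x' : EuclideanSpace ℝ (Fin m), (∀ i, i ≠ j → x i = x' i) →
    |pgrad V j x - pgrad V j x'| ≤ Lc * ‖x - x'‖

/-- If `g` is Lipschitz (relative to the point `t`) then any derivative at `t` is bounded. -/
lemma abs_deriv_le_of_lip {g : ℝ → ℝ} {g' t C : ℝ} (h : HasDerivAt g g' t)
    (hl : ∀ s, |g s - g t| ≤ C * |s - t|) : |g'| ≤ C := by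
  have h1 : Tendsto (slope g t) (𝓝[≠] t) (𝓝 g') := hasDerivAt_iff_tendsto_slope.1 h
  refine le_of_tendsto h1.abs ?_
  filter_upwards [self_mem_nhdsWithin] with y hy
  have hy' : (0:ℝ) < |y - t| := abs_pos.2 (sub_ne_zero.2 hy)
  rw [slope_def_field, abs_div, div_le_iff₀ hy']
  exact hl y

/-- The derivative of a monotone function is nonnegative. -/
lemma deriv_nonneg_of_monotone' {g : ℝ → ℝ} {g' t : ℝ} (hm : Monotone g)
    (h : HasDerivAt g g' t) : 0 ≤ g' := by
  have h1 : Tendsto (slope g t) (𝓝[≠] t) (𝓝 g') := hasDerivAt_iff_tendsto_slope.1 h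
  refine ge_of_tendsto h1 ?_
  filter_upwards [self_mem_nhdsWithin] with y hy
  rcases lt_or_gt_of_ne (hy : y ≠ t) with h'|h'
  · rw [slope_def_field]
    exact div_nonneg_of_nonpos (by simp [hm h'.le]) (by linarith)
  · rw [slope_def_field]
    exact div_nonneg (by simp [hm h'.le]) (by linarith)

/-- Coordinate decomposition in Euclidean space. -/
lemma eucl_decomp {m : ℕ} (d : EuclideanSpace ℝ (Fin m)) :
    d = ∑ i, d i • EuclideanSpace.single i (1:ℝ) := by
  have := (EuclideanSpace.basisFun (Fin m) ℝ).sum_repr d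
  simp only [EuclideanSpace.basisFun_apply, EuclideanSpace.basisFun_repr] at this
  exact this.symm

set_option maxHeartbeats 1000000 in
/-- if `L` is the smallest cross-block Lipschitz constant and `Lc` the smallest
coordinate Lipschitz constant of the partial gradients of a twice continuously differentiable
convex `V : ℝ^m → ℝ`, then `L ≤ √(m-1) · Lc`. -/
theorem stmt0 {m : ℕ} (hm : 2 ≤ m) (V : EuclideanSpace ℝ (Fin m) → ℝ)
    (hV : ContDiff ℝ 2 V) (hconv : ConvexOn ℝ Set.univ V)
    (L Lc : ℝ)
    (hL : CrossLip V L) (hLmin : ∀ L', CrossLip V L' → L ≤ L')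
    (hLc : CoordLip V Lc) (hLcmin : ∀ L', CoordLip V L' → Lc ≤ L') :
    L ≤ Real.sqrt ((m : ℝ) - 1) * Lc := by
  classical
  have hV1 : Differentiable ℝ V := hV.differentiable two_ne_zero
  have hV2 : Differentiable ℝ (fderiv ℝ V) :=
    (hV.fderiv_right (m := 1) le_rfl).differentiable one_ne_zero
  set B : EuclideanSpace ℝ (Fin m) →
      EuclideanSpace ℝ (Fin m) →L[ℝ] EuclideanSpace ℝ (Fin m) →L[ℝ] ℝ :=
    fderiv ℝ (fderiv ℝ V) with hBdef
  -- derivative of the partial gradients along lines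
  have hderiv : ∀ (a d c : EuclideanSpace ℝ (Fin m)) (t : ℝ),
      HasDerivAt (fun t : ℝ => fderiv ℝ V (a + t • d) c) (B (a + t • d) d c) t := by
    intro a d c t
    have hp : HasDerivAt (fun t : ℝ => a + t • d) d t := by
      simpa using ((hasDerivAt_id t).smul_const d).const_add a
    have h1 : HasFDerivAt (fderiv ℝ V) (B (a + t • d)) (a + t • d) := (hV2 _).hasFDerivAt
    have h2 := ((ContinuousLinearMap.apply ℝ ℝ c).hasFDerivAt.comp _ h1).comp_hasDerivAt t hp
    simpa [Function.comp_def] using h2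
  -- symmetry of the Hessian
  have hsym : ∀ (a u w : EuclideanSpace ℝ (Fin m)), B a u w = B a w u := fun a u w =>
    second_derivative_symmetric (fun y => (hV1 y).hasFDerivAt) ((hV2 a).hasFDerivAt) u w
  -- the Hessian is positive semidefinite
  have hPSD : ∀ (a v : EuclideanSpace ℝ (Fin m)), 0 ≤ B a v v := by
    intro a v
    set φ : ℝ → ℝ := fun t => V (a + t • v) with hφ
    have hφconv : ConvexOn ℝ Set.univ φ := by
      have h1 : ConvexOn ℝ
          ((AffineMap.lineMap a (a + v) : ℝ →ᵃ[ℝ] EuclideanSpace ℝ (Fin m)) ⁻¹' Set.univ)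
          (V ∘ (AffineMap.lineMap a (a + v) : ℝ →ᵃ[ℝ] EuclideanSpace ℝ (Fin m))) :=
        hconv.comp_affineMap _
      have h2 : (V ∘ (AffineMap.lineMap a (a + v) : ℝ →ᵃ[ℝ] EuclideanSpace ℝ (Fin m))) = φ := by
        funext t
        simp [AffineMap.lineMap_apply, hφ, add_comm]
      rw [h2, Set.preimage_univ] at h1
      exact h1
    have hφd : ∀ t : ℝ, HasDerivAt φ (fderiv ℝ V (a + t • v) v) t := by
      intro t
      have hp : HasDerivAt (fun t : ℝ => a + t • v) v t := by
        simpa using ((hasDerivAt_id t).smul_const v).const_add a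
      exact (hV1 _).hasFDerivAt.comp_hasDerivAt t hp
    have hmono : Monotone (fun t : ℝ => fderiv ℝ V (a + t • v) v) := by
      have h1 : MonotoneOn (deriv φ) Set.univ :=
        hφconv.monotoneOn_deriv (fun x _ => (hφd x).differentiableAt)
      have h2 : deriv φ = fun t : ℝ => fderiv ℝ V (a + t • v) v := by
        funext t; exact (hφd t).deriv
      rw [h2] at h1
      exact monotoneOn_univ.1 h1
    have h0 := hderiv a v v 0
    simp only [zero_smul, add_zero] at h0
    exact deriv_nonneg_of_monotone' hmono h0
  -- Lc is nonnegative
  have hLc0 : 0 ≤ Lc := by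
    have j0 : Fin m := ⟨0, by omega⟩
    have h := hLc j0 (EuclideanSpace.single j0 1) 0
      (fun i hi => by simp [EuclideanSpace.single_apply, hi])
    have hn : ‖(EuclideanSpace.single j0 (1:ℝ)) - 0‖ = 1 := by
      simp [EuclideanSpace.norm_single]
    rw [hn, mul_one] at h
    exact le_trans (abs_nonneg _) h
  -- diagonal entries of the Hessian are bounded by Lc
  have hdiag : ∀ (a : EuclideanSpace ℝ (Fin m)) (i : Fin m),
      B a (EuclideanSpace.single i 1) (EuclideanSpace.single i 1) ≤ Lc := by
    intro a i
    set e : EuclideanSpace ℝ (Fin m) := EuclideanSpace.single i 1 with he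
    have hg := hderiv a e e 0
    simp only [zero_smul, add_zero] at hg
    have hlip : ∀ s : ℝ,
        |fderiv ℝ V (a + s • e) e - fderiv ℝ V (a + (0:ℝ) • e) e| ≤ Lc * |s - 0| := by
      intro s
      have hc : ∀ k, k ≠ i → (a + s • e) k = (a + (0:ℝ) • e) k := by
        intro k hk
        simp [he, PiLp.add_apply, PiLp.smul_apply, EuclideanSpace.single_apply, hk]
      have h := hLc i (a + s • e) (a + (0:ℝ) • e) hc
      have hdd : (a + s • e) - (a + (0:ℝ) • e) = (s - 0) • e := by module
      rw [hdd] at h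
      rw [norm_smul, he, EuclideanSpace.norm_single] at h
      simpa [pgrad, he, Real.norm_eq_abs] using h
    have hlip' : ∀ s : ℝ,
        |fderiv ℝ V (a + s • e) e - fderiv ℝ V a e| ≤ Lc * |s - 0| := by
      intro s
      have := hlip s
      simpa only [zero_smul, add_zero] using this
    have habs := abs_deriv_le_of_lip hg (fun s => by
      simpa only [zero_smul, add_zero] using hlip' s)
    exact le_trans (le_abs_self _) habs
  -- off-diagonal entries are bounded by Lc via Cauchy-Schwarz for the PSD Hessian
  have hoff : ∀ (a : EuclideanSpace ℝ (Fin m)) (i j : Fin m),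
      |B a (EuclideanSpace.single j 1) (EuclideanSpace.single i 1)| ≤ Lc := by
    intro a i j
    set u : EuclideanSpace ℝ (Fin m) := EuclideanSpace.single j 1 with hu
    set w : EuclideanSpace ℝ (Fin m) := EuclideanSpace.single i 1 with hw
    obtain ⟨α, hα⟩ : ∃ α, B a u u = α := ⟨_, rfl⟩
    obtain ⟨β, hβ⟩ : ∃ β, B a u w = β := ⟨_, rfl⟩
    obtain ⟨γ, hγ⟩ : ∃ γ, B a w w = γ := ⟨_, rfl⟩
    have key : ∀ t : ℝ, 0 ≤ γ * (t * t) + (2 * β) * t + α := by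
      intro t
      have h0 := hPSD a (u + t • w)
      have hexp : B a (u + t • w) (u + t • w)
          = B a u u + t * B a u w + t * B a w u + t * (t * B a w w) := by
        simp only [map_add, map_smul, ContinuousLinearMap.add_apply,
          ContinuousLinearMap.smul_apply, smul_eq_mul]
        ring
      rw [hexp, hsym a w u, hα, hβ, hγ] at h0
      calc (0:ℝ) ≤ α + t * β + t * β + t * (t * γ) := h0
        _ = γ * (t * t) + (2 * β) * t + α := by ring
    have hαLc : α ≤ Lc := hα ▸ hdiag a j
    have hγLc : γ ≤ Lc := hγ ▸ hdiag a i
    have hα0 : 0 ≤ α := hα ▸ hPSD a u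
    have hγ0 : 0 ≤ γ := hγ ▸ hPSD a w
    have hd := discrim_le_zero key
    rw [discrim] at hd
    have h1 : β ^ 2 ≤ α * γ := by nlinarith
    have h3 : β ^ 2 ≤ Lc ^ 2 := by nlinarith
    rw [hβ]
    calc |β| = Real.sqrt (β ^ 2) := (Real.sqrt_sq_eq_abs _).symm
      _ ≤ Real.sqrt (Lc ^ 2) := Real.sqrt_le_sqrt h3
      _ = Lc := Real.sqrt_sq hLc0
  -- the main step: √(m-1)·Lc is a cross-block Lipschitz constant
  have key : CrossLip V (Real.sqrt ((m : ℝ) - 1) * Lc) := by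
    intro j x x' hx
    set d : EuclideanSpace ℝ (Fin m) := x - x' with hdd
    have hdj : d j = 0 := by simp [hdd, PiLp.sub_apply, hx]
    set C : ℝ := Real.sqrt ((m : ℝ) - 1) * Lc * ‖d‖ with hC
    -- the Cauchy-Schwarz bound on coordinates
    have hCS : ∑ i ∈ univ.erase j, |d i| ≤ Real.sqrt ((m : ℝ) - 1) * ‖d‖ := by
      have h1 := Finset.sum_mul_sq_le_sq_mul_sq (univ.erase j)
        (fun _ => (1:ℝ)) (fun i => |d i|)
      simp only [one_mul, one_pow] at h1
      have hcard : (∑ _i ∈ univ.erase j, (1:ℝ)) = (m : ℝ) - 1 := by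
        rw [Finset.sum_const, Finset.card_erase_of_mem (mem_univ j), card_univ,
          Fintype.card_fin]
        rw [nsmul_eq_mul, mul_one, Nat.cast_sub (by omega : 1 ≤ m), Nat.cast_one]
      have h2 : ∑ i ∈ univ.erase j, |d i| ^ 2 ≤ ‖d‖ ^ 2 := by
        have hnorm : ‖d‖ ^ 2 = ∑ i, ‖d i‖ ^ 2 := by
          rw [EuclideanSpace.norm_eq, Real.sq_sqrt]
          exact Finset.sum_nonneg fun i _ => sq_nonneg _
        rw [hnorm]
        refine Finset.sum_le_sum_of_subset_of_nonneg (subset_univ _) ?_ |>.trans_eq ?_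
        · intro i _ _; exact sq_nonneg _
        · simp [Real.norm_eq_abs]
      have h3 : (∑ i ∈ univ.erase j, |d i|) ^ 2 ≤ (((m : ℝ) - 1)) * ‖d‖ ^ 2 := by
        calc (∑ i ∈ univ.erase j, |d i|) ^ 2
            ≤ (∑ _i ∈ univ.erase j, (1:ℝ)) * ∑ i ∈ univ.erase j, |d i| ^ 2 := h1
          _ ≤ ((m : ℝ) - 1) * ‖d‖ ^ 2 := by
              rw [hcard]
              exact mul_le_mul_of_nonneg_left h2 (by
                have : (2:ℝ) ≤ (m : ℝ) := by exact_mod_cast hm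
                linarith)
      have hs : 0 ≤ ∑ i ∈ univ.erase j, |d i| :=
        Finset.sum_nonneg fun i _ => abs_nonneg _
      have hm1 : (0:ℝ) ≤ (m : ℝ) - 1 := by
        have : (2:ℝ) ≤ (m : ℝ) := by exact_mod_cast hm
        linarith
      calc ∑ i ∈ univ.erase j, |d i|
          = Real.sqrt ((∑ i ∈ univ.erase j, |d i|) ^ 2) := (Real.sqrt_sq hs).symm
        _ ≤ Real.sqrt (((m : ℝ) - 1) * ‖d‖ ^ 2) := Real.sqrt_le_sqrt h3
        _ = Real.sqrt ((m : ℝ) - 1) * ‖d‖ := by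
            rw [Real.sqrt_mul hm1, Real.sqrt_sq (norm_nonneg _)]
    -- pointwise bound on the derivative along the segment
    have hb : ∀ t : ℝ, |B (x' + t • d) d (EuclideanSpace.single j 1)| ≤ C := by
      intro t
      set a : EuclideanSpace ℝ (Fin m) := x' + t • d with ha
      have hsum : B a (EuclideanSpace.single j 1) d
          = ∑ i, d i * B a (EuclideanSpace.single j 1) (EuclideanSpace.single i 1) := by
        conv_lhs => rw [eucl_decomp d]
        rw [map_sum]
        simp [smul_eq_mul]
      calc |B a d (EuclideanSpace.single j 1)|
          = |B a (EuclideanSpace.single j 1) d| := by rw [hsym]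
        _ = |∑ i, d i * B a (EuclideanSpace.single j 1) (EuclideanSpace.single i 1)| := by
            rw [hsum]
        _ = |∑ i ∈ univ.erase j,
              d i * B a (EuclideanSpace.single j 1) (EuclideanSpace.single i 1)| := by
            rw [← Finset.add_sum_erase _ _ (mem_univ j), hdj, zero_mul, zero_add]
        _ ≤ ∑ i ∈ univ.erase j, |d i| * Lc := by
            refine le_trans (Finset.abs_sum_le_sum_abs _ _) (Finset.sum_le_sum ?_)
            intro i _
            rw [abs_mul]
            exact mul_le_mul_of_nonneg_left (hoff a i j) (abs_nonneg _)
        _ = (∑ i ∈ univ.erase j, |d i|) * Lc := by rw [Finset.sum_mul]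
        _ ≤ (Real.sqrt ((m : ℝ) - 1) * ‖d‖) * Lc := mul_le_mul_of_nonneg_right hCS hLc0
        _ = C := by rw [hC]; ring
    -- mean value inequality on [0,1]
    have hmvt := norm_image_sub_le_of_norm_deriv_le_segment_01'
      (f := fun t : ℝ => fderiv ℝ V (x' + t • d) (EuclideanSpace.single j 1))
      (f' := fun t : ℝ => B (x' + t • d) d (EuclideanSpace.single j 1))
      (fun t _ => (hderiv x' d _ t).hasDerivWithinAt)
      (fun t _ => by rw [Real.norm_eq_abs]; exact hb t)
    have hx1 : x' + (1:ℝ) • d = x := by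
      rw [one_smul, hdd]; abel
    have hx0 : x' + (0:ℝ) • d = x' := by simp
    rw [Real.norm_eq_abs] at hmvt
    simp only [hx1, hx0] at hmvt
    calc |pgrad V j x - pgrad V j x'|
        ≤ C := hmvt
      _ = Real.sqrt ((m : ℝ) - 1) * Lc * ‖x - x'‖ := by rw [hC, hdd]
  exact hLmin _ key
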